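/- An elementary collapse preserves homotopy type: if σ is a free face of a finite simplicial complex C (i.e., σ is a nonempty face strictly contained in exactly one other face of C), then the geometric realization of C deformation retracts onto the geometric realization of C with σ and the unique face properly containing σ removed. -/

import Mathlib

open Finset
open scoped Classical

lemma exists_coords {E : Type*} [NormedAddCommGroup E] [NormedSpace ℝ E]
    (τ : Finset E) (p₀ : E) (hp₀ : p₀ ∈ τ)
    (hind : AffineIndependent ℝ ((↑) : τ → E)) :
    ∃ c : E → E → ℝ,
      (∀ u, Continuous (c u)) ∧
      (∀ s ⊆ τ, ∀ (w : E → ℝ) (x : E), ∑ u ∈ s, w u = 1 → ∑ u ∈ s, w u • u = x →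
        ∀ u ∈ τ, c u x = if u ∈ s then w u else 0) := by
  classical
  set i₀ : {x // x ∈ τ} := ⟨p₀, hp₀⟩ with hi₀
  have hli := (affineIndependent_iff_linearIndependent_vsub ℝ _ i₀).mp hind
  -- reindex to ↥(τ.erase p₀)
  set v : {u // u ∈ τ.erase p₀} → E := fun u => (u : E) - p₀ with hv
  have hli2 : LinearIndependent ℝ v := by
    set e : {u // u ∈ τ.erase p₀} → {x : {x // x ∈ τ} // x ≠ i₀} := fun u =>
      ⟨⟨(u : E), by simpa using (Finset.mem_of_mem_erase u.2)⟩, by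
        intro h
        have : (u : E) = p₀ := congrArg Subtype.val h
        exact (Finset.mem_erase.mp u.2).1 this⟩ with he
    have einj : Function.Injective e := by
      intro a b hab
      have h6 : ((e a : {x // x ∈ τ}) : E) = ((e b : {x // x ∈ τ}) : E) :=
        congrArg (fun z : {x : {x // x ∈ τ} // x ≠ i₀} => ((z : {x // x ∈ τ}) : E)) hab
      exact Subtype.ext h6
    have h5 := hli.comp e einj
    have heq : v = (fun i : {x : {x // x ∈ τ} // x ≠ i₀} => (↑↑i : E) -ᵥ (↑i₀ : E)) ∘ e := by
      funext u; simp only [Function.comp, he, hv, vsub_eq_sub]; rfl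
    rw [heq]; exact h5
  set W : Submodule ℝ E := Submodule.span ℝ (Set.range v) with hW
  haveI : FiniteDimensional ℝ W := FiniteDimensional.span_of_finite ℝ (Set.finite_range v)
  set b : Module.Basis _ ℝ W := Module.Basis.span hli2 with hb
  have hg : ∀ i : {u // u ∈ τ.erase p₀}, ∃ gi : E →L[ℝ] ℝ,
      ∀ y : W, gi y = b.coord i y := by
    intro i
    obtain ⟨gi, h1, _⟩ := exists_extension_norm_eq W
      (LinearMap.toContinuousLinearMap (b.coord i))
    exact ⟨gi, fun y => by simpa using h1 y⟩
  choose g hgspec using hg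
  refine ⟨fun u x => if hu : u ∈ τ.erase p₀ then g ⟨u, hu⟩ (x - p₀)
      else 1 - ∑ i : {u // u ∈ τ.erase p₀}, g i (x - p₀), ?_, ?_⟩
  · intro u
    by_cases hu : u ∈ τ.erase p₀
    · simp only [hu, dif_pos]
      exact (g ⟨u, hu⟩).continuous.comp (continuous_id.sub continuous_const)
    · simp only [hu, dif_neg, not_false_iff]
      exact continuous_const.sub (continuous_finset_sum _ fun i _ =>
        (g i).continuous.comp (continuous_id.sub continuous_const))
  · intro s hs w x hw1 hwx u hu
    set w' : E → ℝ := fun u => if u ∈ s then w u else 0 with hw'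
    have h1 : ∑ u ∈ τ, w' u = 1 := by
      rw [hw', Finset.sum_ite_mem, Finset.inter_eq_right.mpr hs, hw1]
    have h2 : ∑ u ∈ τ, w' u • u = x := by
      rw [← hwx]
      calc ∑ u ∈ τ, w' u • u = ∑ u ∈ τ, (if u ∈ s then w u • u else 0) := by
              refine Finset.sum_congr rfl fun u _ => ?_
              by_cases h : u ∈ s <;> simp [hw', h]
        _ = ∑ u ∈ τ ∩ s, w u • u := Finset.sum_ite_mem _ _ _
        _ = ∑ u ∈ s, w u • u := by rw [Finset.inter_eq_right.mpr hs]
    -- key: x - p₀ as combination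
    have hkey : x - p₀ = ∑ u ∈ τ.erase p₀, w' u • (u - p₀) := by
      have : ∑ u ∈ τ.erase p₀, w' u • (u - p₀) = ∑ u ∈ τ, w' u • (u - p₀) :=
        Finset.sum_erase τ (by simp)
      rw [this]
      simp only [smul_sub]
      rw [Finset.sum_sub_distrib, h2, ← Finset.sum_smul, h1, one_smul]
    have hXW : x - p₀ ∈ W := by
      rw [hkey]
      refine Submodule.sum_mem _ fun u hu' => Submodule.smul_mem _ _ ?_
      exact Submodule.subset_span ⟨⟨u, hu'⟩, rfl⟩
    have hXrepr : (⟨x - p₀, hXW⟩ : W) = ∑ i : {u // u ∈ τ.erase p₀}, w' i • b i := by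
      apply Subtype.ext
      push_cast
      rw [hkey]
      rw [← Finset.sum_coe_sort (τ.erase p₀) (fun u => w' u • (u - p₀))]
      congr 1
      funext i
      rw [hb, Module.Basis.span_apply]
    have hcoord : ∀ i : {u // u ∈ τ.erase p₀}, g i (x - p₀) = w' i := by
      intro i
      have h4 : b.coord i ⟨x - p₀, hXW⟩ = w' ↑i := by
        rw [hXrepr, Module.Basis.coord_apply]
        exact congrFun (b.repr_sum_self fun j => w' ↑j) i
      have h3 := hgspec i ⟨x - p₀, hXW⟩
      rw [h4] at h3
      exact h3
    by_cases hu' : u ∈ τ.erase p₀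
    · simp only [hu', dif_pos]
      rw [hcoord ⟨u, hu'⟩]
    · have hup : u = p₀ := by
        by_contra hne
        exact hu' (Finset.mem_erase.mpr ⟨hne, hu⟩)
      simp only [hu', dif_neg, not_false_iff]
      have hsum : ∑ i : {u // u ∈ τ.erase p₀}, g i (x - p₀) = ∑ u ∈ τ.erase p₀, w' u := by
        rw [← Finset.sum_coe_sort (τ.erase p₀) w']
        exact Finset.sum_congr rfl fun i _ => hcoord i
      have : ∑ u ∈ τ.erase p₀, w' u = 1 - w' p₀ := by
        have := Finset.add_sum_erase τ w' hp₀
        rw [h1] at this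
        linarith
      rw [hsum, this, hup]
      have hrfl : w' p₀ = if p₀ ∈ s then w p₀ else 0 := rfl
      rw [← hrfl]; ring

/-- An elementary collapse preserves homotopy type: if `σ` is a free face of a
finite simplicial complex `C` (contained in exactly one other face `τ`), then the geometric
realization of `C` (strongly) deformation retracts onto the realization of `C − {σ, τ}`. -/
theorem elementary_collapse_deformation_retract
    {E : Type*} [NormedAddCommGroup E] [NormedSpace ℝ E]
    (C : Geometry.SimplicialComplex ℝ E) (hfin : C.faces.Finite)
    (σ τ : Finset E) (hσ : σ ∈ C.faces) (hτ : τ ∈ C.faces) (hst : σ ⊂ τ)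
    (huniq : ∀ ρ ∈ C.faces, σ ⊂ ρ → ρ = τ) :
    ∃ H : C(unitInterval × C.space, C.space),
      (∀ x : C.space, H (0, x) = x) ∧
      (∀ x : C.space, (H (1, x) : E) ∈ ⋃ s ∈ C.faces \ {σ, τ}, convexHull ℝ (s : Set E)) ∧
      (∀ (t : unitInterval) (x : C.space),
        (x : E) ∈ (⋃ s ∈ C.faces \ {σ, τ}, convexHull ℝ (s : Set E)) → H (t, x) = x) := by
  classical
  have hσne : σ.Nonempty := Finset.nonempty_iff_ne_empty.mpr
    (fun h => C.empty_notMem (h ▸ hσ))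
  obtain ⟨v, hvτ, hvσ⟩ : ∃ v, v ∈ τ ∧ v ∉ σ := by
    obtain ⟨v, hv1, hv2⟩ := Finset.exists_of_ssubset hst; exact ⟨v, hv1, hv2⟩
  have hτeq : τ = insert v σ := by
    have hsub : insert v σ ⊆ τ := Finset.insert_subset hvτ hst.subset
    have hmem : insert v σ ∈ C.faces :=
      C.down_closed hτ hsub (Finset.insert_nonempty _ _)
    exact (huniq _ hmem (Finset.ssubset_insert hvσ)).symm
  obtain ⟨c, hc_cont, hc_uniq⟩ := exists_coords τ v hvτ (C.indep hτ)
  set m : E → ℝ := fun x => σ.inf' hσne (fun u => c u x) with hm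
  have hmcont : Continuous m := Continuous.finset_inf'_apply hσne (fun i _ => hc_cont i)
  have hrep : ∀ x ∈ convexHull ℝ (τ : Set E),
      (∀ u ∈ τ, 0 ≤ c u x) ∧ (∑ u ∈ τ, c u x = 1) ∧ (∑ u ∈ τ, c u x • u = x) := by
    intro x hx
    rw [Finset.convexHull_eq] at hx
    obtain ⟨w, hw0, hw1, hwx⟩ := hx
    have hwx' : ∑ u ∈ τ, w u • u = x := by
      rw [← hwx, Finset.centerMass_eq_of_sum_1 _ _ hw1]
      simp
    have hcu := hc_uniq τ (subset_refl _) w x hw1 hwx'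
    refine ⟨fun u hu => ?_, ?_, ?_⟩
    · rw [hcu u hu, if_pos hu]; exact hw0 u hu
    · rw [Finset.sum_congr rfl (fun u hu => by rw [hcu u hu, if_pos hu])]; exact hw1
    · rw [Finset.sum_congr rfl (fun u hu => by rw [hcu u hu, if_pos hu])]; exact hwx'
  have hzero : ∀ s ⊆ τ, ∀ x ∈ convexHull ℝ (s : Set E), ∀ u ∈ τ, u ∉ s → c u x = 0 := by
    intro s hsub x hx u hu hus
    rw [Finset.convexHull_eq] at hx
    obtain ⟨w, hw0, hw1, hwx⟩ := hx
    have hwx' : ∑ u' ∈ s, w u' • u' = x := by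
      rw [← hwx, Finset.centerMass_eq_of_sum_1 _ _ hw1]
      simp
    rw [hc_uniq s hsub w x hw1 hwx' u hu, if_neg hus]
  have hm0 : ∀ x ∈ convexHull ℝ (τ : Set E), 0 ≤ m x := by
    intro x hx
    exact Finset.le_inf' _ _ (fun u hu => (hrep x hx).1 u (hst.subset hu))
  have hmle : ∀ x : E, ∀ u ∈ σ, m x ≤ c u x := fun x u hu => Finset.inf'_le _ hu
  have hmzero : ∀ ρ ∈ C.faces, ρ ≠ σ → ρ ≠ τ → ∀ x ∈ convexHull ℝ (ρ : Set E),
      x ∈ convexHull ℝ (τ : Set E) → m x = 0 := by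
    intro ρ hρ hρσ hρτ x hxρ hxτ
    have hx' : x ∈ convexHull ℝ ((ρ ∩ τ : Finset E) : Set E) := by
      have h := C.inter_subset_convexHull hρ hτ ⟨hxρ, hxτ⟩
      rwa [Finset.coe_inter]
    have hns : ¬ σ ⊆ ρ ∩ τ := by
      intro hcon
      have hσρ : σ ⊆ ρ := hcon.trans Finset.inter_subset_left
      rcases eq_or_lt_of_le hσρ with h | h
      · exact hρσ h.symm
      · exact hρτ (huniq ρ hρ h)
    obtain ⟨u₀, hu₀σ, hu₀⟩ := Finset.not_subset.mp hns
    have h0 : c u₀ x = 0 :=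
      hzero (ρ ∩ τ) Finset.inter_subset_right x hx' u₀ (hst.subset hu₀σ) hu₀
    have hle : m x ≤ c u₀ x := hmle x u₀ hu₀σ
    have hge := hm0 x hxτ
    linarith
  set d : E := (σ.card : ℝ) • v - ∑ u ∈ σ, u with hd
  set w₂ : E → ℝ → E → ℝ := fun x s u => if u ∈ σ then c u x - s else c u x + σ.card * s
    with hw₂
  have hw₂σ : ∀ x s, ∀ u ∈ σ, w₂ x s u = c u x - s := by
    intro x s u hu; rw [hw₂]; simp only [hu, if_pos]
  have hw₂v : ∀ x s, w₂ x s v = c v x + σ.card * s := by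
    intro x s; rw [hw₂]; simp only [hvσ, if_neg, not_false_iff]
  have hkey : ∀ x ∈ convexHull ℝ (τ : Set E), ∀ s : ℝ,
      (∑ u ∈ τ, w₂ x s u = 1) ∧ (∑ u ∈ τ, w₂ x s u • u = x + s • d) := by
    intro x hx s
    obtain ⟨hpos, hsum1, hsumx⟩ := hrep x hx
    have e1 : ∑ u ∈ σ, w₂ x s u = (∑ u ∈ σ, c u x) - σ.card * s := by
      rw [Finset.sum_congr rfl (hw₂σ x s), Finset.sum_sub_distrib, Finset.sum_const,
        nsmul_eq_mul, mul_comm]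
    have e2 : ∑ u ∈ σ, w₂ x s u • u = (∑ u ∈ σ, c u x • u) - s • ∑ u ∈ σ, u := by
      rw [Finset.smul_sum, ← Finset.sum_sub_distrib]
      refine Finset.sum_congr rfl fun u hu => ?_
      rw [hw₂σ x s u hu, sub_smul]
    constructor
    · rw [hτeq, Finset.sum_insert hvσ] at hsum1 ⊢
      rw [hw₂v, e1]
      linarith
    · rw [hτeq, Finset.sum_insert hvσ] at hsumx ⊢
      conv_rhs => rw [← hsumx]
      rw [hw₂v, e2, hd, add_smul, smul_sub, smul_smul, mul_comm s (σ.card : ℝ)]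
      abel
  have hw₂pos : ∀ x ∈ convexHull ℝ (τ : Set E), ∀ s : ℝ, 0 ≤ s → s ≤ m x →
      ∀ u ∈ τ, 0 ≤ w₂ x s u := by
    intro x hx s hs0 hsm u hu
    by_cases huσ : u ∈ σ
    · rw [hw₂σ x s u huσ]
      have := hmle x u huσ
      linarith
    · rw [hw₂]
      simp only [huσ, if_neg, not_false_iff]
      have := (hrep x hx).1 u hu
      positivity
  have hmemhull : ∀ x ∈ convexHull ℝ (τ : Set E), ∀ s : ℝ, 0 ≤ s → s ≤ m x →
      x + s • d ∈ convexHull ℝ (τ : Set E) := by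
    intro x hx s hs0 hsm
    obtain ⟨h1, h2⟩ := hkey x hx s
    rw [Finset.convexHull_eq]
    refine ⟨w₂ x s, hw₂pos x hx s hs0 hsm, h1, ?_⟩
    rw [Finset.centerMass_eq_of_sum_1 _ _ h1]
    simpa using h2
  -- the "time-dependent displacement" function
  set μ : E → ℝ := fun x => if x ∈ convexHull ℝ (τ : Set E) then m x else 0 with hμ
  have hμτ : ∀ x ∈ convexHull ℝ (τ : Set E), μ x = m x := fun x hx => if_pos hx
  have hμ0 : ∀ x : E, x ∉ convexHull ℝ (τ : Set E) → μ x = 0 := fun x hx => if_neg hx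
  have hμzero : ∀ ρ ∈ C.faces, ρ ≠ σ → ρ ≠ τ → ∀ x ∈ convexHull ℝ (ρ : Set E), μ x = 0 := by
    intro ρ hρ h1 h2 x hx
    by_cases hxτ : x ∈ convexHull ℝ (τ : Set E)
    · rw [hμτ x hxτ]; exact hmzero ρ hρ h1 h2 x hx hxτ
    · exact hμ0 x hxτ
  have hμnonneg : ∀ x : E, 0 ≤ μ x := by
    intro x
    by_cases hxτ : x ∈ convexHull ℝ (τ : Set E)
    · rw [hμτ x hxτ]; exact hm0 x hxτ
    · rw [hμ0 x hxτ]
  -- continuity of μ on the space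
  have hμcont : Continuous fun x : C.space => μ (x : E) := by
    haveI : Finite ↥C.faces := hfin.to_subtype
    apply LocallyFinite.continuous
      (f := fun ρ : C.faces =>
        ((↑) ⁻¹' (convexHull ℝ ((ρ : Finset E) : Set E)) : Set C.space))
    · exact locallyFinite_of_finite _
    · ext x
      simp only [Set.mem_iUnion, Set.mem_preimage, Set.mem_univ, iff_true]
      have hx := x.2
      rw [Geometry.SimplicialComplex.mem_space_iff] at hx
      obtain ⟨s, hs, hxs⟩ := hx
      exact ⟨⟨s, hs⟩, hxs⟩
    · intro ρ
      exact (((ρ : Finset E).finite_toSet.isCompact_convexHull ℝ).isClosed).preimage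
        continuous_subtype_val
    · intro ρ
      by_cases hρ : (ρ : Finset E) = σ ∨ (ρ : Finset E) = τ
      · have hsub : ((ρ : Finset E) : Set E) ⊆ (τ : Set E) := by
          rcases hρ with h | h
          · rw [h]; exact_mod_cast hst.subset
          · rw [h]
        refine ContinuousOn.congr ((hmcont.comp continuous_subtype_val).continuousOn) ?_
        intro x hx
        simp only [Set.mem_preimage] at hx
        exact hμτ _ (convexHull_mono hsub hx)
      · push_neg at hρ
        refine ContinuousOn.congr (continuousOn_const (c := (0 : ℝ))) ?_
        intro x hx
        simp only [Set.mem_preimage] at hx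
        exact hμzero ρ ρ.2 hρ.1 hρ.2 _ hx
  -- the homotopy as a bare function
  set F : unitInterval × C.space → E :=
    fun p => (p.2 : E) + ((p.1 : ℝ) * μ (p.2 : E)) • d with hF
  have hFmem : ∀ p : unitInterval × C.space, F p ∈ C.space := by
    rintro ⟨t, x⟩
    by_cases hx : (x : E) ∈ convexHull ℝ (τ : Set E)
    · have h0 : 0 ≤ (t : ℝ) * μ (x : E) := mul_nonneg t.2.1 (hμnonneg _)
      have h1 : (t : ℝ) * μ (x : E) ≤ m (x : E) := by
        rw [hμτ _ hx]
        have := hm0 _ hx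
        nlinarith [t.2.2]
      exact C.convexHull_subset_space hτ (hmemhull _ hx _ h0 h1)
    · rw [hF]
      simp only [hμ0 _ hx, mul_zero, zero_smul, add_zero]
      exact x.2
  have hFcont : Continuous F := by
    apply Continuous.add
    · exact continuous_subtype_val.comp continuous_snd
    · exact (((continuous_subtype_val.comp continuous_fst).mul
        (hμcont.comp continuous_snd))).smul continuous_const
  refine ⟨⟨fun p => ⟨F p, hFmem p⟩, (hFcont.subtype_mk hFmem)⟩, ?_, ?_, ?_⟩
  · intro x
    apply Subtype.ext
    show F (0, x) = (x : E)
    rw [hF]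
    norm_num
  · intro x
    show F (1, x) ∈ _
    by_cases hx : (x : E) ∈ convexHull ℝ (τ : Set E)
    · obtain ⟨u₀, hu₀σ, hmin⟩ := Finset.exists_mem_eq_inf' hσne (fun u => c u (x : E))
      have hF1 : F (1, x) = (x : E) + m (x : E) • d := by
        rw [hF]; simp only [hμτ _ hx]; norm_num
      obtain ⟨h1, h2⟩ := hkey (x : E) hx (m (x : E))
      have hvmem : v ∈ τ.erase u₀ :=
        Finset.mem_erase.mpr ⟨fun h => hvσ (h ▸ hu₀σ), hvτ⟩
      have hu₀τ : u₀ ∈ τ := hst.subset hu₀σ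
      have hmx : m (x : E) = c u₀ (x : E) := hmin
      have hw₂u₀ : w₂ (x : E) (m (x : E)) u₀ = 0 := by
        rw [hw₂σ _ _ _ hu₀σ, hmx, sub_self]
      have hsum1' : ∑ u ∈ τ.erase u₀, w₂ (x : E) (m (x : E)) u = 1 := by
        rw [Finset.sum_erase _ hw₂u₀]; exact h1
      have hsumx' : ∑ u ∈ τ.erase u₀, w₂ (x : E) (m (x : E)) u • u
          = (x : E) + m (x : E) • d := by
        rw [Finset.sum_erase _ (by rw [hw₂u₀, zero_smul])]; exact h2
      have hface : τ.erase u₀ ∈ C.faces :=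
        C.down_closed hτ (Finset.erase_subset _ _)
          ⟨v, hvmem⟩
      have hmem2 : F (1, x) ∈ convexHull ℝ ((τ.erase u₀ : Finset E) : Set E) := by
        rw [Finset.convexHull_eq]
        refine ⟨w₂ (x : E) (m (x : E)), ?_, hsum1', ?_⟩
        · intro u hu
          exact hw₂pos _ hx _ (hm0 _ hx) le_rfl u (Finset.mem_of_mem_erase hu)
        · rw [Finset.centerMass_eq_of_sum_1 _ _ hsum1']
          rw [hF1]
          simpa using hsumx'
      rw [Set.mem_iUnion₂]
      refine ⟨τ.erase u₀, ?_, hmem2⟩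
      simp only [Set.mem_diff, Set.mem_insert_iff, Set.mem_singleton_iff]
      refine ⟨hface, ?_⟩
      push_neg
      constructor
      · intro h; exact hvσ (h ▸ hvmem)
      · intro h; exact (Finset.notMem_erase u₀ τ) (h.symm ▸ hu₀τ)
    · have hF1 : F (1, x) = (x : E) := by
        rw [hF]; simp only [hμ0 _ hx, mul_zero, zero_smul, add_zero]
      rw [hF1]
      have hx2 := x.2
      rw [Geometry.SimplicialComplex.mem_space_iff] at hx2
      obtain ⟨ρ, hρ, hxρ⟩ := hx2
      rw [Set.mem_iUnion₂]
      refine ⟨ρ, ?_, hxρ⟩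
      simp only [Set.mem_diff, Set.mem_insert_iff, Set.mem_singleton_iff]
      refine ⟨hρ, ?_⟩
      push_neg
      constructor
      · rintro rfl
        exact hx (convexHull_mono (by exact_mod_cast hst.subset) hxρ)
      · rintro rfl
        exact hx hxρ
  · intro t x hx
    apply Subtype.ext
    show F (t, x) = (x : E)
    rw [Set.mem_iUnion₂] at hx
    obtain ⟨ρ, hρ, hxρ⟩ := hx
    simp only [Set.mem_diff, Set.mem_insert_iff, Set.mem_singleton_iff] at hρ
    push_neg at hρ
    have : μ (x : E) = 0 := hμzero ρ hρ.1 hρ.2.1 hρ.2.2 _ hxρ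
    rw [hF]
    simp [this]
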